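/- arXiv:1511.07990 — 4 statements merged into one kernel-verified Lean document; each statement's English description precedes it below -/
import Mathlib

section
/- Let G be a finite simple graph and let G_1, G_2 be two proper induced subgraphs of G such that G = G_1 ∪ G_2 (every vertex and every edge of G lies in G_1 or in G_2) and the common vertex set of G_1 and G_2 induces a clique in G. Then G is perfect if and only if G_1 and G_2 are both perfect. -/
open Finset SimpleGraph

namespace TPerfection

variable {V : Type*}

/-- A stable (independent) set of vertices: pairwise non-adjacent. -/
def IsStableSet (G : SimpleGraph V) (S : Finset V) : Prop :=
  ∀ u ∈ S, ∀ v ∈ S, ¬ G.Adj u v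

/-- STAB(G): convex hull of incidence vectors of stable sets. -/
def stabPolytope (G : SimpleGraph V) [Fintype V] [DecidableEq V] : Set (V → ℝ) :=
  convexHull ℝ { x | ∃ S : Finset V, IsStableSet G S ∧ x = fun v => if v ∈ S then (1 : ℝ) else 0 }

/-- `c` is an induced (chordless) cycle of `G`. -/
def IsInducedCycle (G : SimpleGraph V) {u : V} (c : G.Walk u u) : Prop :=
  c.IsCycle ∧ ∀ x y : V, x ∈ c.support → y ∈ c.support → G.Adj x y → s(x, y) ∈ c.edges

def boxConstraints (x : V → ℝ) : Prop := ∀ v, 0 ≤ x v ∧ x v ≤ 1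

def edgeConstraints (G : SimpleGraph V) (x : V → ℝ) : Prop :=
  ∀ u v : V, G.Adj u v → x u + x v ≤ 1

def cliqueConstraints (G : SimpleGraph V) (x : V → ℝ) : Prop :=
  ∀ K : Finset V, G.IsClique (K : Set V) → ∑ v ∈ K, x v ≤ 1

def oddCycleConstraints [DecidableEq V] (G : SimpleGraph V) (x : V → ℝ) : Prop :=
  ∀ (u : V) (c : G.Walk u u), IsInducedCycle G c → Odd c.length →
    ∑ v ∈ c.support.toFinset, x v ≤ ((c.length : ℝ) - 1) / 2

/-- Solution set of box, edge and odd-cycle constraints. -/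
def tPolytope (G : SimpleGraph V) [DecidableEq V] : Set (V → ℝ) :=
  { x | boxConstraints x ∧ edgeConstraints G x ∧ oddCycleConstraints G x }

/-- Solution set of box, clique and odd-cycle constraints. -/
def hPolytope (G : SimpleGraph V) [DecidableEq V] : Set (V → ℝ) :=
  { x | boxConstraints x ∧ cliqueConstraints G x ∧ oddCycleConstraints G x }

/-- Solution set of box and clique constraints. -/
def qstabPolytope (G : SimpleGraph V) : Set (V → ℝ) :=
  { x | boxConstraints x ∧ cliqueConstraints G x }

def TPerfect (G : SimpleGraph V) [Fintype V] [DecidableEq V] : Prop :=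
  tPolytope G = stabPolytope G

def HPerfect (G : SimpleGraph V) [Fintype V] [DecidableEq V] : Prop :=
  hPolytope G = stabPolytope G

/-- The clique number, as an extended natural number. -/
noncomputable def cliqueNumber (G : SimpleGraph V) : ℕ∞ :=
  sSup ((fun n : ℕ => (n : ℕ∞)) '' { n | ∃ K : Finset V, G.IsNClique n K })

/-- A graph is perfect if every induced subgraph has chromatic number equal to
clique number. -/
def IsPerfect (G : SimpleGraph V) : Prop :=
  ∀ S : Set V, (G.induce S).chromaticNumber = cliqueNumber (G.induce S)

/-- `G` is a loose wheel with hub `hub` and rim `c`: `c` is a cycle, `hub` lies outside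
of it and has at least three neighbours on it, and the rim together with the hub
comprise all vertices and edges of `G`. -/
structure IsLooseWheel (G : SimpleGraph V) (hub : V) {u : V} (c : G.Walk u u) : Prop where
  isCycle : c.IsCycle
  hub_not_mem : hub ∉ c.support
  spokes : ∃ w₁ w₂ w₃ : V, w₁ ∈ c.support ∧ w₂ ∈ c.support ∧ w₃ ∈ c.support ∧
    w₁ ≠ w₂ ∧ w₁ ≠ w₃ ∧ w₂ ≠ w₃ ∧ G.Adj hub w₁ ∧ G.Adj hub w₂ ∧ G.Adj hub w₃
  vertex_cover : ∀ w : V, w ∈ c.support ∨ w = hub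
  edge_cover : ∀ x y : V, G.Adj x y → s(x, y) ∈ c.edges ∨ x = hub ∨ y = hub

/-- A segment of a loose wheel: a path of the rim joining two neighbours of the hub
and containing no other neighbour of the hub. -/
def IsSegment (G : SimpleGraph V) (hub : V) {u : V} (c : G.Walk u u)
    {a b : V} (p : G.Walk a b) : Prop :=
  p.IsPath ∧ a ≠ b ∧ G.Adj hub a ∧ G.Adj hub b ∧
    (∀ e ∈ p.edges, e ∈ c.edges) ∧
    (∀ w ∈ p.support, G.Adj hub w → w = a ∨ w = b)

/-- `G` is a loose odd wheel: a loose wheel with odd rim having at least three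
(pairwise distinct, hence pairwise edge-disjoint) segments of odd length. -/
def IsLooseOddWheel [DecidableEq V] (G : SimpleGraph V) : Prop :=
  ∃ (hub u : V) (c : G.Walk u u), IsLooseWheel G hub c ∧ Odd c.length ∧
    ∃ (a₁ b₁ : V) (p₁ : G.Walk a₁ b₁) (a₂ b₂ : V) (p₂ : G.Walk a₂ b₂)
      (a₃ b₃ : V) (p₃ : G.Walk a₃ b₃),
      IsSegment G hub c p₁ ∧ IsSegment G hub c p₂ ∧ IsSegment G hub c p₃ ∧
      Odd p₁.length ∧ Odd p₂.length ∧ Odd p₃.length ∧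
      Disjoint p₁.edges.toFinset p₂.edges.toFinset ∧
      Disjoint p₁.edges.toFinset p₃.edges.toFinset ∧
      Disjoint p₂.edges.toFinset p₃.edges.toFinset

/-- The neighbourhood of `v` is a stable set. -/
def StableNeighborhood (G : SimpleGraph V) (v : V) : Prop :=
  ∀ x y : V, G.Adj v x → G.Adj v y → ¬ G.Adj x y

/-- The t-contraction of `G` at `v`: delete `{v} ∪ N(v)` and add a new vertex
(`none`) adjacent exactly to the remaining vertices having a neighbour in `N(v)`. -/
def tContract (G : SimpleGraph V) (v : V) :
    SimpleGraph (Option { w : V // w ≠ v ∧ ¬ G.Adj v w }) where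
  Adj x y :=
    match x, y with
    | none, none => False
    | none, some b => ∃ n, G.Adj v n ∧ G.Adj b.1 n
    | some a, none => ∃ n, G.Adj v n ∧ G.Adj a.1 n
    | some a, some b => G.Adj a.1 b.1
  symm := by
    constructor
    rintro (_ | a) (_ | b) h
    · exact h
    · exact h
    · exact h
    · exact h.symm
  loopless := by
    constructor
    rintro (_ | a) h
    · exact h
    · exact G.loopless.irrefl _ h

/-- The wheel with hub `none` and rim the cycle of length `k` on `Fin k`. -/
def wheelGraph (k : ℕ) : SimpleGraph (Option (Fin k)) where
  Adj x y :=
    match x, y with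
    | none, none => False
    | none, some _ => True
    | some _, none => True
    | some i, some j => i ≠ j ∧ ((i.1 + 1) % k = j.1 ∨ (j.1 + 1) % k = i.1)
  symm := by
    constructor
    rintro (_ | i) (_ | j) h
    · exact h
    · trivial
    · trivial
    · exact ⟨h.1.symm, h.2.symm⟩
  loopless := by
    constructor
    rintro (_ | i) h
    · exact h
    · exact h.1 rfl

/-- One step of t-contraction between (isomorphism classes of) graphs. -/
def TContractStep : (Σ α : Type, SimpleGraph α) → (Σ α : Type, SimpleGraph α) → Prop :=
  fun G H => ∃ v : G.1, StableNeighborhood G.2 v ∧ Nonempty (H.2 ≃g tContract G.2 v)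


lemma cliqueNumber_le_of_embedding {α β : Type*} {G : SimpleGraph α} {H : SimpleGraph β}
    (f : G ↪g H) : cliqueNumber G ≤ cliqueNumber H := by
  classical
  apply sSup_le
  rintro x ⟨n, ⟨K, hK⟩, rfl⟩
  apply le_sSup
  refine ⟨n, ⟨K.map f.toEmbedding, ?_, by simp [hK.2]⟩, rfl⟩
  rintro x hx y hy hne
  simp only [Finset.coe_map, Set.mem_image, Finset.mem_coe] at hx hy
  obtain ⟨a, ha, rfl⟩ := hx
  obtain ⟨b, hb, rfl⟩ := hy
  exact f.map_rel_iff.mpr (hK.1 (Finset.mem_coe.mpr ha) (Finset.mem_coe.mpr hb)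
    (fun h => hne (by rw [h])))

lemma chromaticNumber_le_of_embedding {α β : Type*} {G : SimpleGraph α} {H : SimpleGraph β}
    (f : G ↪g H) : G.chromaticNumber ≤ H.chromaticNumber := by
  rw [chromaticNumber_eq_biInf (G := H)]
  exact le_iInf₂ fun n hn => (Colorable.of_hom f.toHom hn).chromaticNumber_le

lemma cliqueNumber_eq_of_iso {α β : Type*} {G : SimpleGraph α} {H : SimpleGraph β}
    (e : G ≃g H) : cliqueNumber G = cliqueNumber H :=
  le_antisymm (cliqueNumber_le_of_embedding e.toRelEmbedding)
    (cliqueNumber_le_of_embedding e.symm.toRelEmbedding)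

lemma chromaticNumber_eq_of_iso {α β : Type*} {G : SimpleGraph α} {H : SimpleGraph β}
    (e : G ≃g H) : G.chromaticNumber = H.chromaticNumber :=
  le_antisymm (chromaticNumber_le_of_embedding e.toRelEmbedding)
    (chromaticNumber_le_of_embedding e.symm.toRelEmbedding)

/-- iso between nested induced subgraphs and the image induced subgraph -/
def induceImageIso (G : SimpleGraph V) (S : Set V) (T : Set ↥S) :
    (G.induce S).induce T ≃g G.induce (Subtype.val '' T) :=
  ⟨⟨fun x => ⟨x.1.1, ⟨x.1, x.2, rfl⟩⟩,
    fun y => ⟨⟨y.1, by obtain ⟨a, _, h⟩ := y.2; exact h ▸ a.2⟩,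
      by obtain ⟨a, ha, h⟩ := y.2; convert ha using 1; exact Subtype.ext h.symm⟩,
    fun x => rfl, fun y => rfl⟩, Iff.rfl⟩

def induceInduceIso (G : SimpleGraph V) (S T : Set V) :
    (G.induce S).induce (Subtype.val ⁻¹' T) ≃g G.induce (S ∩ T) :=
  ⟨⟨fun x => ⟨x.1.1, x.1.2, x.2⟩, fun y => ⟨⟨y.1, y.2.1⟩, y.2.2⟩,
    fun x => rfl, fun y => rfl⟩, Iff.rfl⟩

lemma isPerfect_induce {G : SimpleGraph V} (h : IsPerfect G) (S : Set V) :
    IsPerfect (G.induce S) := by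
  intro T
  rw [chromaticNumber_eq_of_iso (induceImageIso G S T),
    cliqueNumber_eq_of_iso (induceImageIso G S T)]
  exact h _

lemma exists_perm_comp {α β : Type*} [Fintype α] [Fintype β] [DecidableEq β] {f g : α → β}
    (hf : Function.Injective f) (hg : Function.Injective g) :
    ∃ σ : Equiv.Perm β, ∀ a, σ (g a) = f a := by
  classical
  have hcard : Fintype.card ↥(Set.range g)ᶜ = Fintype.card ↥(Set.range f)ᶜ := by
    rw [Fintype.card_compl_set, Fintype.card_compl_set,
      Set.card_range_of_injective hf, Set.card_range_of_injective hg]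
  let e : ↥(Set.range g) ≃ ↥(Set.range f) :=
    (Equiv.ofInjective g hg).symm.trans (Equiv.ofInjective f hf)
  let eC : ↥(Set.range g)ᶜ ≃ ↥(Set.range f)ᶜ := Fintype.equivOfCardEq hcard
  refine ⟨(Equiv.Set.sumCompl (Set.range g)).symm.trans ((e.sumCongr eC).trans
    (Equiv.Set.sumCompl (Set.range f))), fun a => ?_⟩
  simp only [Equiv.trans_apply]
  rw [Equiv.Set.sumCompl_symm_apply_of_mem (Set.mem_range_self a)]
  simp [e, Equiv.Set.sumCompl_apply_inl, Equiv.ofInjective_apply]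

/-- If `G` is the union of two proper induced subgraphs `G₁`, `G₂`
(induced on vertex sets `S₁`, `S₂`) whose common vertex set induces a clique, then
`G` is perfect iff both `G₁` and `G₂` are perfect. -/
theorem perfect_iff_of_clique_cutset {V : Type*} [Fintype V] (G : SimpleGraph V)
    (S₁ S₂ : Set V) (h₁ : S₁ ≠ Set.univ) (h₂ : S₂ ≠ Set.univ)
    (hunion : S₁ ∪ S₂ = Set.univ)
    (hedges : ∀ u v : V, G.Adj u v → (u ∈ S₁ ∧ v ∈ S₁) ∨ (u ∈ S₂ ∧ v ∈ S₂))
    (hclique : G.IsClique (S₁ ∩ S₂)) :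
    IsPerfect G ↔ IsPerfect (G.induce S₁) ∧ IsPerfect (G.induce S₂) := by
  classical
  constructor
  · intro h
    exact ⟨isPerfect_induce h S₁, isPerfect_induce h S₂⟩
  · rintro ⟨hp₁, hp₂⟩ T
    have memS₂ : ∀ v : V, v ∉ S₁ → v ∈ S₂ := fun v hv =>
      (Set.mem_union v S₁ S₂).mp (hunion.symm ▸ Set.mem_univ v) |>.resolve_left hv
    have hA : (G.induce (S₁ ∩ T)).chromaticNumber = cliqueNumber (G.induce (S₁ ∩ T)) := by
      have := hp₁ (Subtype.val ⁻¹' T)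
      rwa [chromaticNumber_eq_of_iso (induceInduceIso G S₁ T),
        cliqueNumber_eq_of_iso (induceInduceIso G S₁ T)] at this
    have hB : (G.induce (S₂ ∩ T)).chromaticNumber = cliqueNumber (G.induce (S₂ ∩ T)) := by
      have := hp₂ (Subtype.val ⁻¹' T)
      rwa [chromaticNumber_eq_of_iso (induceInduceIso G S₂ T),
        cliqueNumber_eq_of_iso (induceInduceIso G S₂ T)] at this
    haveI : Fintype ↥T := Set.Finite.fintype (Set.toFinite T)
    set s : Set ℕ := { n | ∃ K : Finset ↥T, (G.induce T).IsNClique n K } with hs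
    have h0 : 0 ∈ s := ⟨∅, by simp⟩
    have hbdd : BddAbove s := by
      refine ⟨Fintype.card ↥T, ?_⟩
      rintro n ⟨K, hK⟩
      exact hK.2 ▸ Finset.card_le_univ K
    set N : ℕ := sSup s with hN
    obtain ⟨K, hK⟩ : N ∈ s := Nat.sSup_mem ⟨0, h0⟩ hbdd
    have hω : cliqueNumber (G.induce T) = (N : ℕ∞) := by
      apply le_antisymm
      · apply sSup_le
        rintro x ⟨n, hn, rfl⟩
        exact Nat.cast_le.2 (le_csSup hbdd hn)
      · exact le_sSup ⟨N, ⟨K, hK⟩, rfl⟩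
    have hωχ : (N : ℕ∞) ≤ (G.induce T).chromaticNumber := by
      have := hK.1.card_le_chromaticNumber
      rwa [hK.2] at this
    have hcol₁ : (G.induce (S₁ ∩ T)).Colorable N := by
      rw [← chromaticNumber_le_iff_colorable, hA]
      calc cliqueNumber (G.induce (S₁ ∩ T)) ≤ cliqueNumber (G.induce T) :=
            cliqueNumber_le_of_embedding (G.induceHomOfLE Set.inter_subset_right)
        _ = (N : ℕ∞) := hω
    have hcol₂ : (G.induce (S₂ ∩ T)).Colorable N := by
      rw [← chromaticNumber_le_iff_colorable, hB]
      calc cliqueNumber (G.induce (S₂ ∩ T)) ≤ cliqueNumber (G.induce T) :=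
            cliqueNumber_le_of_embedding (G.induceHomOfLE Set.inter_subset_right)
        _ = (N : ℕ∞) := hω
    obtain ⟨c₁⟩ := hcol₁
    obtain ⟨c₂⟩ := hcol₂
    haveI : Fintype ↥(S₁ ∩ S₂ ∩ T) := Set.Finite.fintype (Set.toFinite _)
    have hadjC : ∀ x y : ↥(S₁ ∩ S₂ ∩ T), x ≠ y → G.Adj x.1 y.1 := by
      intro x y hxy
      exact hclique x.2.1 y.2.1 (fun h => hxy (Subtype.ext h))
    have hf₁ : Function.Injective
        (fun x : ↥(S₁ ∩ S₂ ∩ T) => c₁ ⟨x.1, x.2.1.1, x.2.2⟩) := by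
      intro x y h
      by_contra hxy
      have hadj : (G.induce (S₁ ∩ T)).Adj ⟨x.1, x.2.1.1, x.2.2⟩ ⟨y.1, y.2.1.1, y.2.2⟩ :=
        hadjC x y hxy
      exact c₁.valid hadj h
    have hf₂ : Function.Injective
        (fun x : ↥(S₁ ∩ S₂ ∩ T) => c₂ ⟨x.1, x.2.1.2, x.2.2⟩) := by
      intro x y h
      by_contra hxy
      have hadj : (G.induce (S₂ ∩ T)).Adj ⟨x.1, x.2.1.2, x.2.2⟩ ⟨y.1, y.2.1.2, y.2.2⟩ :=
        hadjC x y hxy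
      exact c₂.valid hadj h
    obtain ⟨σ, hσ⟩ := exists_perm_comp hf₁ hf₂
    have hcolT : (G.induce T).Colorable N := by
      refine ⟨Coloring.mk (fun v => if h : (v : V) ∈ S₁ then c₁ ⟨v.1, h, v.2⟩
        else σ (c₂ ⟨v.1, memS₂ v.1 h, v.2⟩)) ?_⟩
      intro u v huv
      have hGuv : G.Adj u.1 v.1 := huv
      split_ifs with hu1 hv1 hv1 hu1 hv1 hv1
      · have hadj : (G.induce (S₁ ∩ T)).Adj ⟨u.1, hu1, u.2⟩ ⟨v.1, hv1, v.2⟩ := hGuv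
        exact c₁.valid hadj
      · have hu2 : u.1 ∈ S₂ := ((hedges _ _ hGuv).resolve_left (fun h => hv1 h.2)).1
        have heq := hσ ⟨u.1, ⟨hu1, hu2⟩, u.2⟩
        rw [← heq]
        intro h
        have hadj : (G.induce (S₂ ∩ T)).Adj ⟨u.1, hu2, u.2⟩ ⟨v.1, memS₂ _ hv1, v.2⟩ := hGuv
        exact c₂.valid hadj (σ.injective h)
      · have hv2 : v.1 ∈ S₂ := ((hedges _ _ hGuv).resolve_left (fun h => hu1 h.1)).2
        have heq := hσ ⟨v.1, ⟨hv1, hv2⟩, v.2⟩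
        rw [← heq]
        intro h
        have hadj : (G.induce (S₂ ∩ T)).Adj ⟨u.1, memS₂ _ hu1, u.2⟩ ⟨v.1, hv2, v.2⟩ := hGuv
        exact c₂.valid hadj (σ.injective h)
      · intro h
        have hadj : (G.induce (S₂ ∩ T)).Adj ⟨u.1, memS₂ _ hu1, u.2⟩ ⟨v.1, memS₂ _ hv1, v.2⟩ :=
          hGuv
        exact c₂.valid hadj (σ.injective h)
    exact le_antisymm (hω ▸ hcolT.chromaticNumber_le) (hω ▸ hωχ)

end TPerfection
end

section
/- Every induced subgraph of an h-perfect finite simple graph is h-perfect. -/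
open Finset SimpleGraph

namespace TPerfection

variable {V : Type*}

/-! ### Auxiliary lemmas -/

section Aux

open SimpleGraph

/-- Pairing bound: along a walk of even length whose edges all satisfy
`x u + x v ≤ 1`, the sum of `x` over the support is at most `length/2 + x b`. -/
private lemma evenBound {G : SimpleGraph V} {x : V → ℝ} :
    ∀ {a b : V} (p : G.Walk a b), Even p.length →
      (∀ u v : V, s(u, v) ∈ p.edges → x u + x v ≤ 1) →
      (p.support.map x).sum ≤ (p.length : ℝ) / 2 + x b
  | _, _, SimpleGraph.Walk.nil, _, _ => by simp
  | _, _, SimpleGraph.Walk.cons _ SimpleGraph.Walk.nil, he, _ => by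
      simp [Nat.even_iff] at he
  | a, b, @SimpleGraph.Walk.cons _ _ _ v₁ _ h (@SimpleGraph.Walk.cons _ _ _ v₂ _ h' q), he, hE => by
      have heq : Even q.length := by
        rcases he with ⟨k, hk⟩
        simp only [SimpleGraph.Walk.length_cons] at hk
        exact ⟨k - 1, by omega⟩
      have ih := evenBound q heq
        (fun u v huv => hE u v (by simp [SimpleGraph.Walk.edges_cons, huv]))
      have h1 : x a + x v₁ ≤ 1 := hE a v₁ (by simp [SimpleGraph.Walk.edges_cons])
      simp only [SimpleGraph.Walk.support_cons, List.map_cons, List.sum_cons,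
        SimpleGraph.Walk.length_cons]
      push_cast
      linarith

private lemma cycleBound0 {G : SimpleGraph V} [DecidableEq V] {x : V → ℝ} {w : V}
    (c : G.Walk w w) (hc : c.IsCycle) (hodd : Odd c.length)
    (hE : ∀ a b : V, s(a, b) ∈ c.edges → x a + x b ≤ 1)
    (hw0 : x w = 0) :
    ∑ v ∈ c.support.toFinset, x v ≤ ((c.length : ℝ) - 1) / 2 := by
  cases c with
  | nil => norm_num [SimpleGraph.Walk.length_nil, Nat.odd_iff] at hodd
  | cons h q =>
    have hnodup : q.support.Nodup := by
      have := hc.support_nodup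
      simpa using this
    have heven : Even q.length := by
      rcases hodd with ⟨k, hk⟩
      simp only [SimpleGraph.Walk.length_cons] at hk
      exact ⟨k, by omega⟩
    have hb := evenBound q heven
      (fun a b hab => hE a b (by simp [SimpleGraph.Walk.edges_cons, hab]))
    have hsup : (SimpleGraph.Walk.cons h q).support.toFinset = q.support.toFinset := by
      simp only [SimpleGraph.Walk.support_cons, List.toFinset_cons]
      exact Finset.insert_eq_self.mpr (by simp)
    rw [hsup, List.sum_toFinset x hnodup]
    simp only [SimpleGraph.Walk.length_cons]
    push_cast
    linarith

private lemma closed_toFinset {G : SimpleGraph V} [DecidableEq V] {u : V}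
    (c : G.Walk u u) (hc : c.length ≠ 0) :
    c.support.toFinset = c.support.tail.toFinset := by
  cases c with
  | nil => simp at hc
  | cons h q =>
    simp only [SimpleGraph.Walk.support_cons, List.tail_cons, List.toFinset_cons]
    exact Finset.insert_eq_self.mpr (by simp)

private lemma cycleBound {G : SimpleGraph V} [DecidableEq V] {x : V → ℝ} {u : V}
    (c : G.Walk u u) (hc : c.IsCycle) (hodd : Odd c.length)
    (hE : ∀ a b : V, s(a, b) ∈ c.edges → x a + x b ≤ 1)
    (w : V) (hw : w ∈ c.support) (hw0 : x w = 0) :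
    ∑ v ∈ c.support.toFinset, x v ≤ ((c.length : ℝ) - 1) / 2 := by
  have hlen : (c.rotate w hw).length = c.length := by
    have h1 := congrArg SimpleGraph.Walk.length (c.take_spec hw)
    rw [SimpleGraph.Walk.length_append] at h1
    rw [SimpleGraph.Walk.rotate, SimpleGraph.Walk.length_append]
    omega
  have hne : c.length ≠ 0 := by rcases hodd with ⟨k, hk⟩; omega
  have hsup : c.support.toFinset = (c.rotate w hw).support.toFinset := by
    rw [closed_toFinset c hne, closed_toFinset (c.rotate w hw) (by omega)]
    exact (List.toFinset_eq_of_perm _ _ (SimpleGraph.Walk.support_rotate c w hw).perm).symm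
  rw [hsup, ← hlen]
  exact cycleBound0 (c.rotate w hw) (hc.rotate hw) (hlen ▸ hodd)
    (fun a b hab => hE a b ((SimpleGraph.Walk.rotate_edges c w hw).perm.mem_iff.mp hab)) hw0

private lemma indicator_mem_hPolytope {G : SimpleGraph V} [DecidableEq V] {T : Finset V}
    (hT : IsStableSet G T) :
    (fun v => if v ∈ T then (1 : ℝ) else 0) ∈ hPolytope G := by
  refine ⟨fun v => by by_cases hv : v ∈ T <;> simp [hv], ?_, ?_⟩
  · intro K hK
    rw [Finset.sum_boole]
    refine Nat.cast_le_one.mpr (Finset.card_le_one.mpr ?_)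
    intro a ha b hb
    simp only [Finset.mem_filter] at ha hb
    by_contra hne
    exact hT a ha.2 b hb.2 (hK (Finset.mem_coe.mpr ha.1) (Finset.mem_coe.mpr hb.1) hne)
  · intro u c hic hodd
    have h3 := hic.1.three_le_length
    have hadj : G.Adj u (c.getVert 1) := by
      simpa using c.adj_getVert_succ (by omega : 0 < c.length)
    have hE : ∀ a b : V, s(a, b) ∈ c.edges →
        (if a ∈ T then (1 : ℝ) else 0) + (if b ∈ T then 1 else 0) ≤ 1 := by
      intro a b hab
      have hadj' := c.adj_of_mem_edges hab
      by_cases ha : a ∈ T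
      · have hb : b ∉ T := fun hb => hT a ha b hb hadj'
        simp [ha, hb]
      · simp only [ha, if_false, zero_add]
        split <;> norm_num
    by_cases hu : u ∈ T
    · refine cycleBound c hic.1 hodd hE (c.getVert 1)
        (SimpleGraph.Walk.mem_support_iff_exists_getVert.mpr ⟨1, rfl, by omega⟩) ?_
      exact if_neg (fun hmem => hT u hu _ hmem hadj)
    · exact cycleBound c hic.1 hodd hE u c.start_mem_support (if_neg hu)

private lemma combo_le {p q C a b : ℝ} (ha : 0 ≤ a) (hb : 0 ≤ b) (hab : a + b = 1)
    (h1 : p ≤ C) (h2 : q ≤ C) : a * p + b * q ≤ C := by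
  have h3 : a * p ≤ a * C := mul_le_mul_of_nonneg_left h1 ha
  have h4 : b * q ≤ b * C := mul_le_mul_of_nonneg_left h2 hb
  have h5 : a * C + b * C = C := by rw [← add_mul, hab, one_mul]
  linarith

private lemma hPolytope_convex (G : SimpleGraph V) [DecidableEq V] :
    Convex ℝ (hPolytope G) := by
  rintro x ⟨hx1, hx2, hx3⟩ y ⟨hy1, hy2, hy3⟩ a b ha hb hab
  refine ⟨fun v => ?_, fun K hK => ?_, fun u c hic hodd => ?_⟩
  · obtain ⟨h1, h2⟩ := hx1 v
    obtain ⟨h3, h4⟩ := hy1 v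
    simp only [Pi.add_apply, Pi.smul_apply, smul_eq_mul]
    exact ⟨by positivity, combo_le ha hb hab h2 h4⟩
  · have h1 := hx2 K hK
    have h2 := hy2 K hK
    simp only [Pi.add_apply, Pi.smul_apply, smul_eq_mul]
    rw [Finset.sum_add_distrib, ← Finset.mul_sum, ← Finset.mul_sum]
    exact combo_le ha hb hab h1 h2
  · have h1 := hx3 u c hic hodd
    have h2 := hy3 u c hic hodd
    simp only [Pi.add_apply, Pi.smul_apply, smul_eq_mul]
    rw [Finset.sum_add_distrib, ← Finset.mul_sum, ← Finset.mul_sum]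
    exact combo_le ha hb hab h1 h2

private lemma stab_subset_hPolytope (G : SimpleGraph V) [Fintype V] [DecidableEq V] :
    stabPolytope G ⊆ hPolytope G := by
  apply convexHull_min ?_ (hPolytope_convex G)
  rintro x ⟨T, hT, rfl⟩
  exact indicator_mem_hPolytope hT

/-- Lift a walk of `G` whose support lies in `S` to a walk of `G.induce S`. -/
private def liftWalk {G : SimpleGraph V} {S : Set V} :
    ∀ {a b : V} (p : G.Walk a b) (ha : a ∈ S) (hb : b ∈ S),
      (∀ v ∈ p.support, v ∈ S) → (G.induce S).Walk ⟨a, ha⟩ ⟨b, hb⟩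
  | _, _, SimpleGraph.Walk.nil, _, _, _ => SimpleGraph.Walk.nil
  | _, _, SimpleGraph.Walk.cons h q, ha, hb, hp =>
      SimpleGraph.Walk.cons (by simpa using h)
        (liftWalk q (hp _ (by simp [SimpleGraph.Walk.support_cons])) hb
          (fun v hv => hp v (by simp [SimpleGraph.Walk.support_cons, hv])))

private lemma liftWalk_map {G : SimpleGraph V} {S : Set V} :
    ∀ {a b : V} (p : G.Walk a b) (ha : a ∈ S) (hb : b ∈ S)
      (hp : ∀ v ∈ p.support, v ∈ S),
      (liftWalk p ha hb hp).map (SimpleGraph.Embedding.induce S).toHom = p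
  | _, _, SimpleGraph.Walk.nil, _, _, _ => rfl
  | _, _, SimpleGraph.Walk.cons h q, ha, hb, hp => by
      rw [liftWalk, SimpleGraph.Walk.map_cons]
      exact congrArg _ (liftWalk_map q _ _ _)

end Aux

/-- Every induced subgraph of an h-perfect finite simple graph is
h-perfect. -/
theorem hPerfect_induce {V : Type*} [Fintype V] [DecidableEq V] (G : SimpleGraph V)
    (h : HPerfect G) (S : Set V) [Fintype S] :
    HPerfect (G.induce S) := by
  classical
  refine Set.Subset.antisymm ?_ (stab_subset_hPolytope _)
  intro x hx
  obtain ⟨hbox, hclq, hoddc⟩ := hx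
  set x' : V → ℝ := fun v => if hv : v ∈ S then x ⟨v, hv⟩ else 0 with hx'
  have hx'val : ∀ (v : V) (hv : v ∈ S), x' v = x ⟨v, hv⟩ := fun v hv => dif_pos hv
  have hx'zero : ∀ v : V, v ∉ S → x' v = 0 := fun v hv => dif_neg hv
  -- x' satisfies the h-constraints of G
  have hx'mem : x' ∈ hPolytope G := by
    refine ⟨?_, ?_, ?_⟩
    · intro v
      by_cases hv : v ∈ S
      · rw [hx'val v hv]; exact hbox _
      · rw [hx'zero v hv]; norm_num
    · intro K hK
      have hsum : ∑ v ∈ K, x' v = ∑ w ∈ K.subtype (· ∈ S), x w := by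
        rw [← Finset.sum_filter_of_ne
          (fun v _ hne => by by_contra hv'; exact hne (hx'zero v hv')),
          ← Finset.subtype_map (· ∈ S), Finset.sum_map]
        exact Finset.sum_congr rfl (fun w _ => hx'val _ w.2)
      rw [hsum]
      refine hclq _ ?_
      intro p hp q hq hne
      simp only [Finset.coe_sort_coe, Finset.mem_coe, Finset.mem_subtype] at hp hq
      have : G.Adj ↑p ↑q := hK hp hq (fun hpq => hne (Subtype.ext hpq))
      simpa using this
    · intro u c hic hodd
      by_cases hall : ∀ v ∈ c.support, v ∈ S
      · -- lift the cycle to the induced subgraph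
        have hu : u ∈ S := hall u c.start_mem_support
        set p := liftWalk c hu hu hall with hp
        have hpm : p.map (SimpleGraph.Embedding.induce S).toHom = c := liftWalk_map c hu hu hall
        have hplen : p.length = c.length := by
          rw [← hpm]; exact (SimpleGraph.Walk.length_map ..).symm
        have hinj : Function.Injective ⇑(SimpleGraph.Embedding.induce (G := G) S).toHom := by
          rw [SimpleGraph.Embedding.coe_toHom]
          exact fun a b hab => Subtype.ext hab
        have hpcyc : p.IsCycle := by
          rw [← SimpleGraph.Walk.map_isCycle_iff_of_injective hinj, hpm]
          exact hic.1
        have hpsup : c.support = p.support.map Subtype.val := by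
          rw [← hpm]; exact SimpleGraph.Walk.support_map ..
        have hpedges : c.edges = p.edges.map (Sym2.map Subtype.val) := by
          rw [← hpm]; exact SimpleGraph.Walk.edges_map ..
        have hpind : IsInducedCycle (G.induce S) p := by
          refine ⟨hpcyc, fun α β hα hβ hadj => ?_⟩
          have hmem : s(↑α, ↑β) ∈ c.edges := by
            refine hic.2 _ _ ?_ ?_ (by simpa using hadj)
            · rw [hpsup]; exact List.mem_map_of_mem hα
            · rw [hpsup]; exact List.mem_map_of_mem hβ
          rw [hpedges, List.mem_map] at hmem
          obtain ⟨e, he, hee⟩ := hmem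
          have : e = s(α, β) := Sym2.map.injective Subtype.val_injective (by simpa using hee)
          rwa [this] at he
        have hb := hoddc _ p hpind (hplen ▸ hodd)
        have hsum : ∑ v ∈ c.support.toFinset, x' v = ∑ w ∈ p.support.toFinset, x w := by
          have : c.support.toFinset = p.support.toFinset.image Subtype.val := by
            rw [hpsup]
            ext v
            simp only [List.mem_toFinset, List.mem_map, Finset.mem_image]
          rw [this, Finset.sum_image (fun a _ b _ hab => Subtype.ext hab)]
          exact Finset.sum_congr rfl (fun w _ => by rw [hx'val _ w.2])
        rw [hsum, ← hplen]
        exact hb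
      · -- some vertex of the cycle lies outside S : use the pairing bound
        push_neg at hall
        obtain ⟨w, hwsup, hwS⟩ := hall
        have hE : ∀ a b : V, s(a, b) ∈ c.edges → x' a + x' b ≤ 1 := by
          intro a b hab
          have hadj := c.adj_of_mem_edges hab
          by_cases haS : a ∈ S <;> by_cases hbS : b ∈ S
          · have hpair := hclq {⟨a, haS⟩, ⟨b, hbS⟩} ?_
            · rw [Finset.sum_pair (fun hh => hadj.ne (congrArg Subtype.val hh))] at hpair
              rw [hx'val a haS, hx'val b hbS]
              exact hpair
            · intro p hp q hq hne
              simp only [Finset.coe_insert, Finset.coe_singleton, Set.mem_insert_iff,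
                Set.mem_singleton_iff] at hp hq
              rcases hp with rfl | rfl <;> rcases hq with rfl | rfl
              · exact absurd rfl hne
              · simpa using hadj
              · simpa using hadj.symm
              · exact absurd rfl hne
          · rw [hx'zero b hbS]
            have := (hbox ⟨a, haS⟩).2
            rw [hx'val a haS]; linarith
          · rw [hx'zero a haS]
            have := (hbox ⟨b, hbS⟩).2
            rw [hx'val b hbS]; linarith
          · rw [hx'zero a haS, hx'zero b hbS]; norm_num
        exact cycleBound c hic.1 hodd hE w hwsup (hx'zero w hwS)
  -- use h-perfection of G and restrict back to S
  rw [HPerfect] at h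
  rw [h] at hx'mem
  let r : (V → ℝ) →ₗ[ℝ] (↥S → ℝ) := LinearMap.funLeft ℝ ℝ (fun v : ↥S => ↑v)
  have himg := r.image_convexHull
    {y | ∃ T : Finset V, IsStableSet G T ∧ y = fun v => if v ∈ T then (1 : ℝ) else 0}
  have hmem2 : r x' ∈ convexHull ℝ
      (r '' {y | ∃ T : Finset V, IsStableSet G T ∧
        y = fun v => if v ∈ T then (1 : ℝ) else 0}) := by
    rw [← himg]
    exact Set.mem_image_of_mem r hx'mem
  have hrx : r x' = x := by
    funext v
    show x' ↑v = x v
    rw [hx'val _ v.2]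
  rw [hrx] at hmem2
  refine convexHull_mono ?_ hmem2
  rintro _ ⟨y, ⟨T, hT, rfl⟩, rfl⟩
  refine ⟨T.subtype (· ∈ S), ?_, ?_⟩
  · intro p hp q hq hadj
    simp only [Finset.mem_subtype] at hp hq
    have : G.Adj ↑p ↑q := by simpa using hadj
    exact hT _ hp _ hq this
  · funext v
    show (if (↑v : V) ∈ T then (1 : ℝ) else 0) = _
    simp [Finset.mem_subtype]


end TPerfection
end

section
/- Every perfect finite simple graph containing no clique on four vertices is t-perfect. -/
open Finset SimpleGraph

namespace TPerfection

variable {V : Type*}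

/-! ### Auxiliary machinery -/

section Aux

lemma list_sum_ind [DecidableEq V] {l : List V} (hl : l.Nodup) (S : Finset V) :
    (l.map fun v => if v ∈ S then (1:ℕ) else 0).sum = (l.toFinset.filter (· ∈ S)).card := by
  classical
  induction l with
  | nil => simp
  | cons a l ih =>
    simp only [List.nodup_cons] at hl
    have ha : a ∉ l.toFinset := fun hh => hl.1 (List.mem_toFinset.mp hh)
    rw [List.map_cons, List.sum_cons, ih hl.2, List.toFinset_cons, Finset.filter_insert]
    by_cases h : a ∈ S
    · rw [if_pos h, if_pos h,
        Finset.card_insert_of_notMem (fun hh => ha (Finset.mem_of_mem_filter _ hh))]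
      omega
    · rw [if_neg h, if_neg h, zero_add]

lemma cycle_support_facts {G : SimpleGraph V} {u : V} {c : G.Walk u u} (hc : c.IsCycle) :
    c.support.dropLast.Nodup ∧ (∀ x, x ∈ c.support.dropLast ↔ x ∈ c.support) ∧
    (∀ x, x ∈ c.support.tail ↔ x ∈ c.support) := by
  classical
  have h3 := hc.three_le_length
  have htn : c.support.tail.Nodup := hc.support_nodup
  have hcons : c.support = u :: c.support.tail := c.support_eq_cons
  have hlen : c.support.length = c.length + 1 := c.length_support
  have htne : c.support.tail ≠ [] := by
    intro h
    have h2 : c.support.length = 1 := by rw [hcons, h]; rfl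
    omega
  have hg : c.support.getLast? = some u := by
    rw [List.getLast?_eq_getLast_of_ne_nil (by simp), c.getLast_support]
  have hg' : c.support.tail.getLast? = some u := by
    obtain ⟨b, t, hbt⟩ := List.exists_cons_of_ne_nil htne
    rw [hcons, hbt] at hg
    rw [hbt]
    rwa [List.getLast?_cons_cons] at hg
  have htail_split : c.support.tail.dropLast ++ [u] = c.support.tail :=
    List.dropLast_append_getLast? _ hg'
  have hu_not : u ∉ c.support.tail.dropLast := by
    intro hu
    have h2 := htn
    rw [← htail_split] at h2
    rcases List.nodup_append'.mp h2 with ⟨_, _, hdisj⟩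
    exact hdisj hu (by simp)
  have hdrop : c.support.dropLast = u :: c.support.tail.dropLast := by
    conv_lhs => rw [hcons]
    rw [List.dropLast_cons_of_ne_nil htne]
  refine ⟨?_, ?_, ?_⟩
  · rw [hdrop]
    refine List.nodup_cons.mpr ⟨hu_not, ?_⟩
    have h2 := htn
    rw [← htail_split] at h2
    exact (List.nodup_append.mp h2).1
  · intro x
    constructor
    · exact fun hx => List.mem_of_mem_dropLast hx
    · intro hx
      rw [hcons] at hx
      rcases List.mem_cons.mp hx with rfl | hx
      · rw [hdrop]; exact List.mem_cons_self
      · rw [← htail_split] at hx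
        rcases List.mem_append.mp hx with hx | hx
        · rw [hdrop]; exact List.mem_cons_of_mem _ hx
        · simp at hx; subst hx; rw [hdrop]; exact List.mem_cons_self
  · intro x
    constructor
    · intro hx; rw [hcons]; exact List.mem_cons_of_mem _ hx
    · intro hx
      rw [hcons] at hx
      rcases List.mem_cons.mp hx with rfl | hx
      · rw [← htail_split]; simp
      · exact hx

lemma two_mul_stable_card_le {G : SimpleGraph V} [DecidableEq V] {u : V} {c : G.Walk u u}
    (hc : c.IsCycle) {S : Finset V} (hS : IsStableSet G S) :
    2 * (c.support.toFinset.filter (· ∈ S)).card ≤ c.length := by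
  classical
  obtain ⟨hnd, hdmem, htmem⟩ := cycle_support_facts hc
  set f : V → ℕ := fun v => if v ∈ S then 1 else 0 with hf
  have hdfin : (c.support.dropLast).toFinset = c.support.toFinset := by
    ext x; simp only [List.mem_toFinset]; exact hdmem x
  have htfin : (c.support.tail).toFinset = c.support.toFinset := by
    ext x; simp only [List.mem_toFinset]; exact htmem x
  have h1 : (c.darts.map fun d => f d.fst).sum = (c.support.toFinset.filter (· ∈ S)).card := by
    rw [show (c.darts.map fun d => f d.fst) = (c.darts.map (·.fst)).map f from by
      rw [List.map_map]; rfl, c.map_fst_darts, list_sum_ind hnd, hdfin]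
  have h2 : (c.darts.map fun d => f d.snd).sum = (c.support.toFinset.filter (· ∈ S)).card := by
    rw [show (c.darts.map fun d => f d.snd) = (c.darts.map (·.snd)).map f from by
      rw [List.map_map]; rfl, c.map_snd_darts, list_sum_ind hc.support_nodup, htfin]
  have hsplit : (c.darts.map fun d => f d.fst + f d.snd).sum
      = (c.darts.map fun d => f d.fst).sum + (c.darts.map fun d => f d.snd).sum := by
    induction c.darts with
    | nil => simp
    | cons d l ih => simp [ih]; ring
  have hbound : (c.darts.map fun d => f d.fst + f d.snd).sum ≤ c.darts.length := by
    have hmem : ∀ x ∈ (c.darts.map fun d => f d.fst + f d.snd), x ≤ 1 := by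
      intro x hx
      obtain ⟨d, _, rfl⟩ := List.mem_map.mp hx
      by_cases hd1 : d.fst ∈ S <;> by_cases hd2 : d.snd ∈ S
      · exact absurd d.adj (hS _ hd1 _ hd2)
      all_goals simp [hf, hd1, hd2]
    calc (c.darts.map fun d => f d.fst + f d.snd).sum
        ≤ (c.darts.map fun d => f d.fst + f d.snd).length • 1 :=
          List.sum_le_card_nsmul _ _ hmem
      _ = c.darts.length := by simp
  rw [← c.length_darts]
  omega

open scoped Classical in
noncomputable def cliqueWt (G : SimpleGraph V) [Fintype V] (p : V → ℕ) : ℕ :=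
  ((Finset.univ : Finset (Finset V)).filter fun K : Finset V => G.IsClique (K : Set V)).sup
    fun K : Finset V => ∑ v ∈ K, p v

lemma le_cliqueWt {G : SimpleGraph V} [Fintype V] {K : Finset V}
    (hK : G.IsClique (K : Set V)) (p : V → ℕ) :
    ∑ v ∈ K, p v ≤ cliqueWt G p := by
  classical
  refine Finset.le_sup (f := fun K : Finset V => ∑ v ∈ K, p v) ?_
  rw [Finset.mem_filter]
  exact ⟨Finset.mem_univ K, hK⟩

lemma cliqueWt_le {G : SimpleGraph V} [Fintype V] {p : V → ℕ} {q : ℕ}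
    (h : ∀ K : Finset V, G.IsClique (K : Set V) → ∑ v ∈ K, p v ≤ q) :
    cliqueWt G p ≤ q := by
  classical
  refine Finset.sup_le fun K hK => h K ?_
  simpa [cliqueWt] using (Finset.mem_filter.mp hK).2

lemma pt_le_cliqueWt {G : SimpleGraph V} [Fintype V] (p : V → ℕ) (v : V) :
    p v ≤ cliqueWt G p := by
  classical
  have h : G.IsClique (({v} : Finset V) : Set V) := by simp
  simpa using le_cliqueWt h p

lemma cliqueWt_mono {G : SimpleGraph V} [Fintype V] {p q : V → ℕ} (h : ∀ v, p v ≤ q v) :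
    cliqueWt G p ≤ cliqueWt G q := by
  classical
  exact cliqueWt_le fun K hK => le_trans (Finset.sum_le_sum fun v _ => h v) (le_cliqueWt hK q)

lemma cliqueNumber_induce_eq {G : SimpleGraph V} [Fintype V] (p : V → ℕ) (hp : ∀ v, p v ≤ 1) :
    cliqueNumber (G.induce {v | p v = 1}) = (cliqueWt G p : ℕ∞) := by
  classical
  set P : Set V := {v | p v = 1} with hP
  apply le_antisymm
  · apply sSup_le
    rintro x ⟨n, ⟨K, hK⟩, rfl⟩
    rw [SimpleGraph.isNClique_iff] at hK
    obtain ⟨hKc, hKcard⟩ := hK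
    set K' : Finset V := K.image Subtype.val with hK'
    have hcard : K'.card = n := by
      rw [hK', Finset.card_image_of_injective _ Subtype.val_injective, hKcard]
    have hclique : G.IsClique (K' : Set V) := by
      intro x hx y hy hxy
      simp only [hK', Finset.coe_image, Set.mem_image, Finset.mem_coe] at hx hy
      obtain ⟨a, ha, rfl⟩ := hx
      obtain ⟨b, hb, rfl⟩ := hy
      have hab : a ≠ b := fun h => hxy (by rw [h])
      exact hKc ha hb hab
    have hsum : ∑ v ∈ K', p v = n := by
      rw [← hcard]
      rw [Finset.card_eq_sum_ones]
      refine Finset.sum_congr rfl fun v hv => ?_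
      have : v ∈ P := by
        simp only [hK', Finset.mem_image] at hv
        obtain ⟨a, _, rfl⟩ := hv
        exact a.2
      exact this
    have hle := le_cliqueWt hclique p
    rw [hsum] at hle
    show (n : ℕ∞) ≤ (cliqueWt G p : ℕ∞)
    exact_mod_cast hle
  · have hne : (((Finset.univ : Finset (Finset V)).filter
        fun K : Finset V => G.IsClique (K : Set V))).Nonempty :=
      ⟨∅, Finset.mem_filter.mpr ⟨Finset.mem_univ _, by simp⟩⟩
    obtain ⟨K, hKmem, hEq⟩ := Finset.exists_mem_eq_sup _ hne fun K : Finset V => ∑ v ∈ K, p v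
    have hKc : G.IsClique (K : Set V) := (Finset.mem_filter.mp hKmem).2
    have hEq' : cliqueWt G p = ∑ v ∈ K, p v := hEq
    set K0 : Finset V := K.filter fun v => p v = 1 with hK0
    have hsum0 : ∑ v ∈ K0, p v = ∑ v ∈ K, p v := by
      rw [hK0]
      refine (Finset.sum_filter_of_ne fun v hv hne => ?_)
      have := hp v; omega
    have hcard0 : K0.card = ∑ v ∈ K0, p v := by
      rw [Finset.card_eq_sum_ones]
      refine Finset.sum_congr rfl fun v hv => ?_
      exact ((Finset.mem_filter.mp hv).2).symm
    set K1 : Finset ↥P := K0.attach.image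
      (fun v => (⟨v.1, (Finset.mem_filter.mp v.2).2⟩ : ↥P)) with hK1
    have hinj : Function.Injective
        (fun v : {x // x ∈ K0} => (⟨v.1, (Finset.mem_filter.mp v.2).2⟩ : ↥P)) := by
      intro a b hab
      have h2 : (a : V) = (b : V) := congrArg (Subtype.val : ↥P → V) hab
      exact Subtype.ext h2
    have hcard1 : K1.card = K0.card := by
      rw [hK1, Finset.card_image_of_injective _ hinj, Finset.card_attach]
    have hclique1 : (G.induce P).IsClique (K1 : Set ↥P) := by
      intro a ha b hb hab
      simp only [hK1, Finset.coe_image, Set.mem_image] at ha hb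
      obtain ⟨a', _, rfl⟩ := ha
      obtain ⟨b', _, rfl⟩ := hb
      have hvals : (a' : V) ≠ (b' : V) := fun h => hab (by exact Subtype.ext h)
      exact hKc (Finset.mem_coe.mpr (Finset.mem_of_mem_filter _ a'.2))
        (Finset.mem_coe.mpr (Finset.mem_of_mem_filter _ b'.2)) hvals
    refine le_sSup ⟨cliqueWt G p, ⟨K1, ?_⟩, rfl⟩
    rw [SimpleGraph.isNClique_iff]
    exact ⟨hclique1, by rw [hcard1, hcard0, hsum0, hEq']⟩

lemma multiset_sum_comm {α β : Type*} (M : Multiset α) (t : Finset β) (f : α → β → ℕ) :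
    (M.map fun a => ∑ i ∈ t, f a i).sum = ∑ i ∈ t, (M.map fun a => f a i).sum := by
  induction M using Multiset.induction_on with
  | empty => simp
  | cons a M ih => simp [ih, Finset.sum_add_distrib]

lemma exists_decomp (G : SimpleGraph V) [Fintype V] [DecidableEq V] (hG : IsPerfect G) :
    ∀ (n : ℕ) (p : V → ℕ), (∑ v, p v = n) →
    ∃ M : Multiset (Finset V), Multiset.card M = cliqueWt G p ∧
      (∀ S ∈ M, IsStableSet G S) ∧
      ∀ v, ((M.map fun S : Finset V => if v ∈ S then 1 else 0).sum = p v) := by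
  intro n
  induction n using Nat.strong_induction_on with
  | _ n IH =>
  intro p hp
  classical
  by_cases h1 : ∀ v, p v ≤ 1
  · -- base case : use a colouring of the induced subgraph
    set P : Set V := {v | p v = 1} with hPdef
    have hcol : (G.induce P).Colorable (cliqueWt G p) := by
      rw [← SimpleGraph.chromaticNumber_le_iff_colorable, hG P,
        cliqueNumber_induce_eq p h1]
    obtain ⟨C⟩ := hcol
    refine ⟨(Finset.univ : Finset (Fin (cliqueWt G p))).val.map
      (fun i => Finset.univ.filter fun v => ∃ h : v ∈ P, C ⟨v, h⟩ = i), ?_, ?_, ?_⟩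
    · simp
    · intro S hS
      simp only [Multiset.mem_map] at hS
      obtain ⟨i, _, rfl⟩ := hS
      intro a ha b hb hab
      simp only [Finset.mem_filter] at ha hb
      obtain ⟨-, hPa, hCa⟩ := ha
      obtain ⟨-, hPb, hCb⟩ := hb
      have hadj : (G.induce P).Adj ⟨a, hPa⟩ ⟨b, hPb⟩ := hab
      have := C.valid hadj
      rw [hCa, hCb] at this
      exact this rfl
    · intro v
      rw [Multiset.map_map]
      have hrw : ((Finset.univ : Finset (Fin (cliqueWt G p))).val.map
          ((fun S : Finset V => if v ∈ S then 1 else 0) ∘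
            (fun i => Finset.univ.filter fun v => ∃ h : v ∈ P, C ⟨v, h⟩ = i))).sum
          = ∑ i : Fin (cliqueWt G p),
              (if v ∈ (Finset.univ.filter fun w => ∃ h : w ∈ P, C ⟨w, h⟩ = i) then 1 else 0 : ℕ) :=
        rfl
      rw [hrw]
      by_cases hv : v ∈ P
      · have hpv : p v = 1 := hv
        rw [hpv]
        have hcond : ∀ i : Fin (cliqueWt G p),
            (v ∈ (Finset.univ.filter fun w => ∃ h : w ∈ P, C ⟨w, h⟩ = i)) ↔ C ⟨v, hv⟩ = i := by
          intro i
          simp only [Finset.mem_filter, Finset.mem_univ, true_and]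
          constructor
          · rintro ⟨h, hh⟩; exact hh
          · intro hh; exact ⟨hv, hh⟩
        calc ∑ i : Fin (cliqueWt G p),
              (if v ∈ (Finset.univ.filter fun w => ∃ h : w ∈ P, C ⟨w, h⟩ = i) then 1 else 0 : ℕ)
            = ∑ i : Fin (cliqueWt G p), (if C ⟨v, hv⟩ = i then 1 else 0 : ℕ) := by
              refine Finset.sum_congr rfl fun i _ => ?_
              by_cases h : C ⟨v, hv⟩ = i
              · rw [if_pos ((hcond i).mpr h), if_pos h]
              · rw [if_neg (fun hh => h ((hcond i).mp hh)), if_neg h]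
          _ = 1 := by rw [Finset.sum_ite_eq]; simp
      · have hpv : p v = 0 := by
          have := h1 v
          have hne : ¬ p v = 1 := hv
          omega
        rw [hpv]
        refine Finset.sum_eq_zero fun i _ => ?_
        rw [if_neg]
        simp only [Finset.mem_filter, Finset.mem_univ, true_and]
        rintro ⟨h, -⟩
        exact hv h
  · -- inductive step
    push_neg at h1
    obtain ⟨u, hu⟩ := h1
    have hu2 : 2 ≤ p u := by omega
    have hnu : p u ≤ n := hp ▸ Finset.single_le_sum (fun i _ => Nat.zero_le (p i))
      (Finset.mem_univ u)
    set p' : V → ℕ := Function.update p u (p u - 1) with hp'def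
    have hp'u : p' u = p u - 1 := by rw [hp'def, Function.update_self]
    have hp'v : ∀ v, v ≠ u → p' v = p v := fun v hv => by
      rw [hp'def, Function.update_of_ne hv]
    have hp'le : ∀ v, p' v ≤ p v := by
      intro v
      by_cases h : v = u
      · subst h; rw [hp'u]; omega
      · rw [hp'v v h]
    have herase : ∑ v ∈ Finset.univ.erase u, p' v = ∑ v ∈ Finset.univ.erase u, p v :=
      Finset.sum_congr rfl fun v hv => hp'v v (Finset.ne_of_mem_erase hv)
    have hs1 : ∑ v ∈ Finset.univ.erase u, p' v + p' u = ∑ v, p' v :=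
      Finset.sum_erase_add _ _ (Finset.mem_univ u)
    have hs2 : ∑ v ∈ Finset.univ.erase u, p v + p u = ∑ v, p v :=
      Finset.sum_erase_add _ _ (Finset.mem_univ u)
    have hsum' : ∑ v, p' v = n - 1 := by omega
    have hn2 : 2 ≤ n := le_trans hu2 hnu
    obtain ⟨M', hM'card, hM'stable, hM'count⟩ := IH (n - 1) (by omega) p' hsum'
    have hwle : cliqueWt G p' ≤ cliqueWt G p := cliqueWt_mono hp'le
    rcases lt_or_eq_of_le hwle with hlt | heq
    · -- room for the extra singleton {u}
      refine ⟨M' + ({u} ::ₘ Multiset.replicate (cliqueWt G p - cliqueWt G p' - 1) ∅),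
        ?_, ?_, ?_⟩
      · simp only [Multiset.card_add, Multiset.card_cons, Multiset.card_replicate, hM'card]
        omega
      · intro S hS
        rcases Multiset.mem_add.mp hS with h | h
        · exact hM'stable S h
        · rcases Multiset.mem_cons.mp h with rfl | h
          · intro a ha b hb hab
            rw [Finset.mem_singleton] at ha hb
            subst ha; subst hb
            exact G.loopless.irrefl _ hab
          · rw [Multiset.eq_of_mem_replicate h]
            intro a ha
            simp at ha
      · intro v
        rw [Multiset.map_add, Multiset.sum_add, Multiset.map_cons, Multiset.sum_cons,
          Multiset.map_replicate, Multiset.sum_replicate]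
        rw [hM'count v]
        have hrep : (if v ∈ (∅ : Finset V) then (1:ℕ) else 0) = 0 := by simp
        rw [hrep, smul_zero, add_zero]
        by_cases h : v = u
        · subst h
          rw [hp'u, if_pos (Finset.mem_singleton_self v)]
          omega
        · rw [hp'v v h, if_neg (fun hh => h (Finset.mem_singleton.mp hh)), add_zero]
    · -- tight case : reuse a stable set containing u
      have hcount_u : (M'.map fun S : Finset V => if u ∈ S then 1 else 0).sum = p u - 1 := by
        rw [hM'count u, hp'u]
      have hAex : ∃ A ∈ M', u ∈ A := by
        by_contra hno
        push_neg at hno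
        have hz : (M'.map fun S : Finset V => if u ∈ S then 1 else 0).sum = 0 := by
          apply Multiset.sum_eq_zero
          intro x hx
          obtain ⟨S, hS, rfl⟩ := Multiset.mem_map.mp hx
          simp [hno S hS]
        omega
      obtain ⟨A, hAmem, huA⟩ := hAex
      have hAstable : IsStableSet G A := hM'stable A hAmem
      have hA1 : ∀ v ∈ A, 1 ≤ p v := by
        intro v hv
        have hmem : ((if v ∈ A then 1 else 0 : ℕ)) ∈
            M'.map (fun S : Finset V => if v ∈ S then 1 else 0) :=
          Multiset.mem_map_of_mem _ hAmem
        have h0 := Multiset.single_le_sum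
          (fun x _ => Nat.zero_le x) _ hmem
        rw [hM'count v] at h0
        rw [if_pos hv] at h0
        exact le_trans h0 (hp'le v)
      set p'' : V → ℕ := fun v => p v - (if v ∈ A then 1 else 0) with hp''def
      have hp''le : ∀ v, p'' v ≤ p v := fun v => Nat.sub_le _ _
      have hcardA : 1 ≤ A.card := Finset.card_pos.mpr ⟨u, huA⟩
      have hindA : ∑ v, (if v ∈ A then 1 else 0 : ℕ) = A.card := by
        rw [Finset.sum_ite_mem, Finset.univ_inter]
        simp
      have hsum'' : ∑ v, p'' v = n - A.card := by
        have h3 : ∑ v, p'' v + ∑ v, (if v ∈ A then 1 else 0 : ℕ) = ∑ v, p v := by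
          rw [← Finset.sum_add_distrib]
          refine Finset.sum_congr rfl fun v _ => ?_
          by_cases h : v ∈ A
          · have := hA1 v h
            simp only [hp''def, if_pos h]
            omega
          · simp [hp''def, h]
        have hAn : A.card ≤ n := by omega
        omega
      have hw2 : 2 ≤ cliqueWt G p := le_trans hu2 (pt_le_cliqueWt p u)
      have hwbound : cliqueWt G p'' ≤ cliqueWt G p - 1 := by
        apply cliqueWt_le
        intro K hK
        by_cases hKmax : ∑ v ∈ K, p v = cliqueWt G p
        · have hmeet : ∃ a ∈ K, a ∈ A := by
            by_cases huK : u ∈ K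
            · exact ⟨u, huK, huA⟩
            · have hKp' : ∑ v ∈ K, p' v = cliqueWt G p' := by
                rw [heq, ← hKmax]
                exact Finset.sum_congr rfl fun v hv => hp'v v (fun h => huK (h ▸ hv))
              set F : Finset V → ℕ := fun S => ∑ v ∈ K, (if v ∈ S then 1 else 0 : ℕ) with hF
              have hswap : (M'.map F).sum
                  = ∑ v ∈ K, (M'.map fun S : Finset V => if v ∈ S then 1 else 0).sum :=
                multiset_sum_comm M' K (fun S v => if v ∈ S then 1 else 0)
              have hsum_eq : (M'.map F).sum = Multiset.card M' := by
                rw [hswap]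
                rw [show (∑ v ∈ K, (M'.map fun S : Finset V => if v ∈ S then 1 else 0).sum)
                    = ∑ v ∈ K, p' v from Finset.sum_congr rfl fun v _ => hM'count v]
                rw [hKp', hM'card]
              have hle1 : ∀ S ∈ M', F S ≤ 1 := by
                intro S hS
                have hFS : F S = (K.filter (· ∈ S)).card := (Finset.card_filter _ _).symm
                rw [hFS]
                refine Finset.card_le_one.mpr fun a ha b hb => ?_
                rw [Finset.mem_filter] at ha hb
                by_contra hne
                exact hM'stable S hS a ha.2 b hb.2 (hK ha.1 hb.1 hne)
              obtain ⟨M₀, hM0⟩ := Multiset.exists_cons_of_mem hAmem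
              have hsplit : (M'.map F).sum = F A + (M₀.map F).sum := by
                rw [hM0, Multiset.map_cons, Multiset.sum_cons]
              have hM0le : (M₀.map F).sum ≤ Multiset.card M₀ := by
                calc (M₀.map F).sum ≤ (Multiset.card (M₀.map F)) • 1 := by
                      refine Multiset.sum_le_card_nsmul _ _ ?_
                      intro x hx
                      obtain ⟨S, hS, rfl⟩ := Multiset.mem_map.mp hx
                      exact hle1 S (hM0 ▸ Multiset.mem_cons_of_mem hS)
                  _ = Multiset.card M₀ := by simp
              have hcards : Multiset.card M' = Multiset.card M₀ + 1 := by
                rw [hM0, Multiset.card_cons]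
              have hFA : 1 ≤ F A := by omega
              have : (K.filter (· ∈ A)).Nonempty := by
                rw [← Finset.card_pos]
                have hFA' : F A = (K.filter (· ∈ A)).card := (Finset.card_filter _ _).symm
                omega
              obtain ⟨a, ha⟩ := this
              rw [Finset.mem_filter] at ha
              exact ⟨a, ha.1, ha.2⟩
          obtain ⟨a, haK, haA⟩ := hmeet
          have e1 : ∑ v ∈ K.erase a, p'' v + p'' a = ∑ v ∈ K, p'' v :=
            Finset.sum_erase_add _ _ haK
          have e2 : ∑ v ∈ K.erase a, p v + p a = ∑ v ∈ K, p v :=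
            Finset.sum_erase_add _ _ haK
          have e3 : ∑ v ∈ K.erase a, p'' v ≤ ∑ v ∈ K.erase a, p v :=
            Finset.sum_le_sum fun v _ => hp''le v
          have e4 : p'' a = p a - 1 := by rw [hp''def]; simp [haA]
          have e5 : 1 ≤ p a := hA1 a haA
          omega
        · have hKle : ∑ v ∈ K, p v ≤ cliqueWt G p := le_cliqueWt hK p
          have hKlt : ∑ v ∈ K, p v ≤ cliqueWt G p - 1 := by omega
          calc ∑ v ∈ K, p'' v ≤ ∑ v ∈ K, p v := Finset.sum_le_sum fun v _ => hp''le v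
            _ ≤ cliqueWt G p - 1 := hKlt
      obtain ⟨M'', hM''card, hM''stable, hM''count⟩ :=
        IH (n - A.card) (by omega) p'' hsum''
      refine ⟨M'' + (A ::ₘ Multiset.replicate (cliqueWt G p - 1 - cliqueWt G p'') ∅),
        ?_, ?_, ?_⟩
      · simp only [Multiset.card_add, Multiset.card_cons, Multiset.card_replicate, hM''card]
        omega
      · intro S hS
        rcases Multiset.mem_add.mp hS with h | h
        · exact hM''stable S h
        · rcases Multiset.mem_cons.mp h with rfl | h
          · exact hAstable
          · rw [Multiset.eq_of_mem_replicate h]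
            intro a ha
            simp at ha
      · intro v
        rw [Multiset.map_add, Multiset.sum_add, Multiset.map_cons, Multiset.sum_cons,
          Multiset.map_replicate, Multiset.sum_replicate]
        rw [hM''count v]
        have hrep : (if v ∈ (∅ : Finset V) then (1:ℕ) else 0) = 0 := by simp
        rw [hrep, smul_zero, add_zero]
        by_cases h : v ∈ A
        · have := hA1 v h
          rw [if_pos h]
          simp only [hp''def, if_pos h]
          omega
        · rw [if_neg h, add_zero]
          simp [hp''def, h]

end Aux


lemma stab_isClosed (G : SimpleGraph V) [Fintype V] [DecidableEq V] :
    IsClosed (stabPolytope G) := by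
  have hfin : ({ x : V → ℝ | ∃ S : Finset V, IsStableSet G S ∧
      x = fun v => if v ∈ S then (1 : ℝ) else 0 }).Finite := by
    have : { x : V → ℝ | ∃ S : Finset V, IsStableSet G S ∧
        x = fun v => if v ∈ S then (1 : ℝ) else 0 }
        ⊆ (fun S : Finset V => fun v => if v ∈ S then (1 : ℝ) else 0) '' Set.univ := by
      rintro x ⟨S, -, rfl⟩
      exact ⟨S, Set.mem_univ _, rfl⟩
    exact Set.Finite.subset (Set.finite_univ.image _) this
  exact hfin.isClosed_convexHull ℝ

lemma list_sum_getD {α : Type*} (g : α → ℝ) (d : α) (hd : g d = 0) :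
    ∀ (L : List α) (q : ℕ), L.length ≤ q →
      ∑ i ∈ Finset.range q, g (L.getD i d) = (L.map g).sum := by
  intro L
  induction L with
  | nil =>
    intro q _
    simp [hd]
  | cons a L ih =>
    intro q hq
    cases q with
    | zero => simp at hq
    | succ q =>
      rw [Finset.sum_range_succ']
      simp only [List.getD_cons_succ, List.getD_cons_zero, List.map_cons, List.sum_cons]
      rw [ih q (by simpa using hq)]
      ring

lemma multiset_ind_sum_cast (v : V) [DecidableEq V] (M : Multiset (Finset V)) :
    (M.map fun S : Finset V => if v ∈ S then (1:ℝ) else 0).sum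
      = ((M.map fun S : Finset V => if v ∈ S then (1:ℕ) else 0).sum : ℝ) := by
  induction M using Multiset.induction_on with
  | empty => simp
  | cons S M ih =>
    simp only [Multiset.map_cons, Multiset.sum_cons, ih]
    by_cases h : v ∈ S <;> simp [h]

lemma mem_stab_of_decomp (G : SimpleGraph V) [Fintype V] [DecidableEq V]
    {q : ℕ} (hq : 1 ≤ q) {p : V → ℕ} (M : Multiset (Finset V))
    (hcard : Multiset.card M ≤ q) (hstab : ∀ S ∈ M, IsStableSet G S)
    (hcount : ∀ v, (M.map fun S : Finset V => if v ∈ S then 1 else 0).sum = p v) :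
    (fun v => (p v : ℝ) / q) ∈ stabPolytope G := by
  classical
  set M' : Multiset (Finset V) := M + Multiset.replicate (q - Multiset.card M) ∅ with hM'
  have hcard' : Multiset.card M' = q := by
    rw [hM', Multiset.card_add, Multiset.card_replicate]
    omega
  have hstab' : ∀ S ∈ M', IsStableSet G S := by
    intro S hS
    rcases Multiset.mem_add.mp hS with h | h
    · exact hstab S h
    · rw [Multiset.eq_of_mem_replicate h]
      intro a ha
      simp at ha
  have hcount' : ∀ v, (M'.map fun S : Finset V => if v ∈ S then 1 else 0).sum = p v := by
    intro v
    rw [hM', Multiset.map_add, Multiset.sum_add, Multiset.map_replicate]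
    simp [hcount v]
  set L : List (Finset V) := M'.toList with hL
  have hLlen : L.length ≤ q := by rw [hL, Multiset.length_toList, hcard']
  have hLmem : ∀ S ∈ L, IsStableSet G S := fun S hS => hstab' S (Multiset.mem_toList.mp hS)
  set z : ℕ → (V → ℝ) := fun i => fun v => if v ∈ L.getD i ∅ then (1:ℝ) else 0 with hz
  have hmem : (Finset.range q).centerMass (fun _ => (1:ℝ)) z ∈ stabPolytope G := by
    refine Finset.centerMass_mem_convexHull _ (fun i _ => zero_le_one) ?_ ?_
    · rw [Finset.sum_const, Finset.card_range]
      have : (0:ℝ) < q := by exact_mod_cast hq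
      simpa using this
    · intro i hi
      by_cases h : i < L.length
      · refine ⟨L.getD i ∅, hLmem _ ?_, rfl⟩
        rw [List.getD_eq_getElem L ∅ h]
        exact List.getElem_mem h
      · refine ⟨∅, ?_, ?_⟩
        · intro a ha; simp at ha
        · rw [hz]
          simp only
          rw [List.getD_eq_default _ _ (by omega)]
  have hcm : (Finset.range q).centerMass (fun _ => (1:ℝ)) z = fun v => (p v : ℝ) / q := by
    rw [Finset.centerMass]
    rw [Finset.sum_const, Finset.card_range]
    funext v
    simp only [one_smul, Pi.smul_apply, smul_eq_mul, nsmul_eq_mul, mul_one]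
    have hsum : (∑ i ∈ Finset.range q, z i) v
        = ∑ i ∈ Finset.range q, (if v ∈ L.getD i ∅ then (1:ℝ) else 0) := by
      rw [Finset.sum_apply]
    rw [hsum]
    rw [list_sum_getD (fun S => if v ∈ S then (1:ℝ) else 0) ∅ (by simp) L q hLlen]
    have hls : (L.map fun S : Finset V => if v ∈ S then (1:ℝ) else 0).sum
        = (M'.map fun S : Finset V => if v ∈ S then (1:ℝ) else 0).sum := by
      conv_rhs => rw [← Multiset.coe_toList M', Multiset.map_coe, Multiset.sum_coe]
    rw [hls, multiset_ind_sum_cast, hcount' v]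
    rw [inv_mul_eq_div]
  rw [← hcm]
  exact hmem


lemma cliqueConstraints_of_mem_tPolytope {G : SimpleGraph V} [Fintype V] [DecidableEq V]
    (h4 : G.CliqueFree 4) {x : V → ℝ} (hx : x ∈ tPolytope G) : cliqueConstraints G x := by
  obtain ⟨hbox, hedge, hodd⟩ := hx
  intro K hK
  have hcard : K.card ≤ 3 := by
    by_contra h
    push_neg at h
    obtain ⟨K', hK'sub, hK'card⟩ := Finset.exists_subset_card_eq (show 4 ≤ K.card by omega)
    refine h4 K' ?_
    rw [SimpleGraph.isNClique_iff]
    exact ⟨hK.subset (by exact_mod_cast hK'sub), hK'card⟩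
  have hcases : K.card = 0 ∨ K.card = 1 ∨ K.card = 2 ∨ K.card = 3 := by omega
  rcases hcases with h|h|h|h
  · rw [Finset.card_eq_zero] at h
    subst h
    simp
  · obtain ⟨a, rfl⟩ := Finset.card_eq_one.mp h
    simpa using (hbox a).2
  · obtain ⟨a, b, hab, rfl⟩ := Finset.card_eq_two.mp h
    rw [Finset.sum_pair hab]
    exact hedge a b (hK (by simp) (by simp) hab)
  · obtain ⟨a, b, c, hab, hac, hbc, rfl⟩ := Finset.card_eq_three.mp h
    have hAab : G.Adj a b := hK (by simp) (by simp) hab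
    have hAbc : G.Adj b c := hK (by simp) (by simp) hbc
    have hAca : G.Adj c a := (hK (by simp) (by simp) hac).symm
    set w : G.Walk a a := Walk.cons hAab (Walk.cons hAbc (Walk.cons hAca Walk.nil)) with hwdef
    have hlen : w.length = 3 := rfl
    have hsupp : w.support = [a, b, c, a] := rfl
    have hedges : w.edges = [s(a,b), s(b,c), s(c,a)] := rfl
    have hcyc : w.IsCycle := by
      rw [Walk.isCycle_def]
      refine ⟨?_, by simp [hwdef], ?_⟩
      · rw [Walk.isTrail_def, hedges]
        simp only [List.nodup_cons, List.mem_cons, List.not_mem_nil, or_false,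
          List.mem_singleton, List.nodup_nil, and_true, not_or]
        refine ⟨⟨?_, ?_⟩, ?_⟩ <;> rw [Sym2.eq_iff] <;> tauto
      · rw [hsupp]
        simp only [List.tail_cons, List.nodup_cons, List.mem_cons, List.not_mem_nil,
          or_false, List.mem_singleton, List.nodup_nil, and_true, not_or]
        exact ⟨⟨hbc, hab.symm⟩, hac.symm, not_false⟩
    have hind : IsInducedCycle G w := by
      refine ⟨hcyc, ?_⟩
      intro y z hy hz hadj
      rw [hsupp] at hy hz
      simp only [List.mem_cons, List.not_mem_nil, or_false] at hy hz
      rw [hedges]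
      simp only [List.mem_cons, List.not_mem_nil, or_false]
      have hyz : y ≠ z := hadj.ne
      rcases hy with rfl|rfl|rfl|rfl <;> rcases hz with rfl|rfl|rfl|rfl <;>
        first
          | exact absurd rfl hyz
          | (left; rfl)
          | (right; left; rfl)
          | (right; right; rfl)
          | (left; exact Sym2.eq_swap)
          | (right; left; exact Sym2.eq_swap)
          | (right; right; exact Sym2.eq_swap)
    have hoddlen : Odd w.length := by rw [hlen]; exact ⟨1, rfl⟩
    have hconstr := hodd a w hind hoddlen
    have htf : w.support.toFinset = {a, b, c} := by
      rw [hsupp]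
      ext y
      simp only [List.toFinset_cons, List.toFinset_nil, LawfulSingleton.insert_empty_eq,
        Finset.mem_insert, Finset.mem_singleton]
      tauto
    rw [htf, hlen] at hconstr
    have hsum3 : ∑ v ∈ ({a,b,c} : Finset V), x v = x a + x b + x c := by
      rw [Finset.sum_insert (by simp [hab, hac]), Finset.sum_insert (by simp [hbc]),
        Finset.sum_singleton]
      ring
    rw [hsum3] at hconstr ⊢
    norm_num at hconstr
    linarith

lemma stab_subset_tPolytope (G : SimpleGraph V) [Fintype V] [DecidableEq V] :
    stabPolytope G ⊆ tPolytope G := by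
  apply convexHull_min
  · rintro y ⟨S, hS, rfl⟩
    refine ⟨?_, ?_, ?_⟩
    · intro v
      by_cases h : v ∈ S <;> simp [h]
    · intro u v huv
      by_cases hu : u ∈ S <;> by_cases hv : v ∈ S
      · exact absurd huv (hS u hu v hv)
      all_goals norm_num [hu, hv]
    · intro u c hic ho
      have h2 := two_mul_stable_card_le hic.1 hS
      rw [Finset.sum_boole]
      obtain ⟨k, hk⟩ := ho
      rw [hk] at h2 ⊢
      have hle : (c.support.toFinset.filter (· ∈ S)).card ≤ k := by omega
      have hcast : ((c.support.toFinset.filter (· ∈ S)).card : ℝ) ≤ k := by exact_mod_cast hle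
      push_cast
      linarith
  · rintro x hx y hy a b ha hb hab
    obtain ⟨hxb, hxe, hxo⟩ := hx
    obtain ⟨hyb, hye, hyo⟩ := hy
    refine ⟨?_, ?_, ?_⟩
    · intro v
      have h1 := hxb v
      have h2 := hyb v
      constructor
      · show 0 ≤ a * x v + b * y v
        nlinarith
      · show a * x v + b * y v ≤ 1
        nlinarith
    · intro u v huv
      have h1 := hxe u v huv
      have h2 := hye u v huv
      show (a * x u + b * y u) + (a * x v + b * y v) ≤ 1
      nlinarith
    · intro u c hic ho
      have h1 := hxo u c hic ho
      have h2 := hyo u c hic ho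
      have hsum : ∑ v ∈ c.support.toFinset, (a • x + b • y) v
          = a * ∑ v ∈ c.support.toFinset, x v + b * ∑ v ∈ c.support.toFinset, y v := by
        rw [Finset.mul_sum, Finset.mul_sum, ← Finset.sum_add_distrib]
        rfl
      rw [hsum]
      have e1 : a * ∑ v ∈ c.support.toFinset, x v ≤ a * (((c.length : ℝ) - 1) / 2) :=
        mul_le_mul_of_nonneg_left h1 ha
      have e2 : b * ∑ v ∈ c.support.toFinset, y v ≤ b * (((c.length : ℝ) - 1) / 2) :=
        mul_le_mul_of_nonneg_left h2 hb
      have e3 : a * (((c.length : ℝ) - 1) / 2) + b * (((c.length : ℝ) - 1) / 2)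
          = ((c.length : ℝ) - 1) / 2 := by
        rw [← add_mul, hab, one_mul]
      linarith

/-- Every perfect finite simple graph containing no clique on four
vertices is t-perfect. -/
theorem tPerfect_of_isPerfect_cliqueFree {V : Type*} [Fintype V] [DecidableEq V]
    (G : SimpleGraph V) (h : IsPerfect G) (h4 : G.CliqueFree 4) :
    TPerfect G := by
  classical
  apply Set.Subset.antisymm
  · intro x hx
    have hcl : cliqueConstraints G x := cliqueConstraints_of_mem_tPolytope h4 hx
    obtain ⟨hbox, -, -⟩ := hx
    set cV : ℕ := Fintype.card V with hcV
    set pN : ℕ → V → ℕ := fun N v => ⌈((N - cV : ℕ) : ℝ) * x v⌉₊ with hpN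
    have hxmem : ∀ N : ℕ, cV + 1 ≤ N → (fun v => ((pN N v : ℝ) / N)) ∈ stabPolytope G := by
      intro N hN
      have hNpos : (1:ℕ) ≤ N := by omega
      have hsub : ((N - cV : ℕ) : ℝ) = (N : ℝ) - cV := by
        rw [Nat.cast_sub (by omega)]
      have hwt : cliqueWt G (pN N) ≤ N := by
        apply cliqueWt_le
        intro K hKcl
        rcases K.eq_empty_or_nonempty with rfl | hKne
        · simp
        · have hstep : ∀ v ∈ K, ((pN N v : ℕ) : ℝ) < ((N - cV : ℕ) : ℝ) * x v + 1 := by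
            intro v _
            exact Nat.ceil_lt_add_one (mul_nonneg (by positivity) (hbox v).1)
          have hlt : ((∑ v ∈ K, pN N v : ℕ) : ℝ) < (N : ℝ) := by
            push_cast
            calc ∑ v ∈ K, ((pN N v : ℕ) : ℝ)
                < ∑ v ∈ K, (((N - cV : ℕ) : ℝ) * x v + 1) :=
                  Finset.sum_lt_sum_of_nonempty hKne hstep
              _ = ((N : ℝ) - cV) * (∑ v ∈ K, x v) + K.card := by
                  rw [Finset.sum_add_distrib, ← Finset.mul_sum, hsub]
                  simp
              _ ≤ (N : ℝ) := by
                  have hK1 : ∑ v ∈ K, x v ≤ 1 := hcl K hKcl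
                  have hK0 : (0:ℝ) ≤ ∑ v ∈ K, x v :=
                    Finset.sum_nonneg fun v _ => (hbox v).1
                  have hKc : (K.card : ℝ) ≤ cV := by
                    exact_mod_cast le_trans (Finset.card_le_univ K) (le_of_eq Finset.card_univ)
                  have hNc : (0:ℝ) ≤ (N:ℝ) - cV := by
                    have : (cV:ℝ) ≤ N := by exact_mod_cast (by omega : cV ≤ N)
                    linarith
                  nlinarith
          have := hlt
          exact_mod_cast this.le
      obtain ⟨M, hMcard, hMstab, hMcount⟩ := exists_decomp G h (∑ v, pN N v) (pN N) rfl
      exact mem_stab_of_decomp G hNpos M (by omega) hMstab hMcount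
    have hclosed := stab_isClosed G
    have htend : Filter.Tendsto (fun N : ℕ => fun v => ((pN N v : ℝ) / N))
        Filter.atTop (nhds x) := by
      rw [tendsto_pi_nhds]
      intro v
      have hxv0 := (hbox v).1
      have hxv1 := (hbox v).2
      have hlow : ∀ᶠ N : ℕ in Filter.atTop, x v - cV / N ≤ (pN N v : ℝ) / N := by
        filter_upwards [Filter.eventually_ge_atTop (cV + 1)] with N hN
        have hNpos : (0:ℝ) < N := by
          have : (1:ℕ) ≤ N := by omega
          exact_mod_cast Nat.lt_of_lt_of_le Nat.zero_lt_one this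
        have h1 : ((N - cV : ℕ) : ℝ) * x v ≤ pN N v := Nat.le_ceil _
        have hsub : ((N - cV : ℕ) : ℝ) = (N : ℝ) - cV := by
          rw [Nat.cast_sub (by omega)]
        rw [hsub] at h1
        rw [le_div_iff₀ hNpos]
        have hexp : (x v - ↑cV / ↑N) * ↑N = ↑N * x v - cV := by
          field_simp
        rw [hexp]
        nlinarith [h1, hxv1, (Nat.cast_nonneg cV : (0:ℝ) ≤ (cV:ℝ))]
      have hhigh : ∀ᶠ N : ℕ in Filter.atTop, (pN N v : ℝ) / N ≤ x v + 1 / N := by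
        filter_upwards [Filter.eventually_ge_atTop (cV + 1)] with N hN
        have hNpos : (0:ℝ) < N := by
          have : (1:ℕ) ≤ N := by omega
          exact_mod_cast Nat.lt_of_lt_of_le Nat.zero_lt_one this
        have h1 : ((pN N v : ℕ) : ℝ) < ((N - cV : ℕ) : ℝ) * x v + 1 :=
          Nat.ceil_lt_add_one (mul_nonneg (by positivity) hxv0)
        have hsub : ((N - cV : ℕ) : ℝ) = (N : ℝ) - cV := by
          rw [Nat.cast_sub (by omega)]
        rw [hsub] at h1
        rw [div_le_iff₀ hNpos]
        have hexp : (x v + 1 / ↑N) * ↑N = ↑N * x v + 1 := by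
          field_simp
        rw [hexp]
        nlinarith [h1, hxv0, (Nat.cast_nonneg cV : (0:ℝ) ≤ (cV:ℝ))]
      have hl : Filter.Tendsto (fun N : ℕ => x v - (cV : ℝ) / N) Filter.atTop (nhds (x v)) := by
        have h0 := tendsto_const_div_atTop_nhds_zero_nat (cV : ℝ)
        simpa using Filter.Tendsto.sub (tendsto_const_nhds (x := x v)) h0
      have hh : Filter.Tendsto (fun N : ℕ => x v + 1 / (N : ℝ)) Filter.atTop (nhds (x v)) := by
        have h0 := tendsto_const_div_atTop_nhds_zero_nat (1 : ℝ)
        simpa using Filter.Tendsto.add (tendsto_const_nhds (x := x v)) h0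
      exact tendsto_of_tendsto_of_tendsto_of_le_of_le' hl hh hlow hhigh
    refine hclosed.mem_of_tendsto htend ?_
    filter_upwards [Filter.eventually_ge_atTop (cV + 1)] with N hN
    exact hxmem N hN
  · exact stab_subset_tPolytope G

end TPerfection
end

section
/- The graph C_10^2, with vertex set ℤ/10ℤ and i adjacent to j if and only if i − j ≡ ±1 or ±2 (mod 10), is not t-perfect. -/
open Finset SimpleGraph

namespace TPerfection

variable {V : Type*}

/-- The graph `C₁₀²`: vertex set `ℤ/10ℤ`, with `i` adjacent to `j` iff
`i - j ≡ ±1` or `±2 (mod 10)`. -/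
def C10sq : SimpleGraph (ZMod 10) where
  Adj i j := i - j = 1 ∨ i - j = -1 ∨ i - j = 2 ∨ i - j = -2
  symm := by
    constructor
    intro i j h
    beta_reduce at h ⊢
    have hji : j - i = -(i - j) := by ring
    rcases h with h | h | h | h <;> rw [hji, h] <;> decide
  loopless := by
    constructor
    intro i h
    rcases h with h | h | h | h <;> rw [sub_self] at h <;> exact absurd h (by decide)

instance : DecidableRel C10sq.Adj := fun i j =>
  inferInstanceAs (Decidable (i - j = 1 ∨ i - j = -1 ∨ i - j = 2 ∨ i - j = -2))

set_option maxRecDepth 10000 in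
lemma four_adj : ∀ a b c d : ZMod 10, a ≠ b → a ≠ c → a ≠ d → b ≠ c → b ≠ d → c ≠ d →
    C10sq.Adj a b ∨ C10sq.Adj a c ∨ C10sq.Adj a d ∨ C10sq.Adj b c ∨ C10sq.Adj b d ∨
    C10sq.Adj c d := by decide

lemma stable_card_le (S : Finset (ZMod 10)) (hS : IsStableSet C10sq S) : S.card ≤ 3 := by
  by_contra h4
  push_neg at h4
  obtain ⟨a, haT⟩ := Finset.card_pos.mp (show 0 < S.card by omega)
  have h1 : 0 < (S.erase a).card := by rw [Finset.card_erase_of_mem haT]; omega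
  obtain ⟨b, hbT⟩ := Finset.card_pos.mp h1
  have h2 : 0 < ((S.erase a).erase b).card := by
    rw [Finset.card_erase_of_mem hbT, Finset.card_erase_of_mem haT]; omega
  obtain ⟨c, hcT⟩ := Finset.card_pos.mp h2
  have h3 : 0 < (((S.erase a).erase b).erase c).card := by
    rw [Finset.card_erase_of_mem hcT, Finset.card_erase_of_mem hbT,
      Finset.card_erase_of_mem haT]; omega
  obtain ⟨d, hdT⟩ := Finset.card_pos.mp h3
  have hdc : d ≠ c := Finset.ne_of_mem_erase hdT
  have hd' := Finset.mem_of_mem_erase hdT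
  have hdb : d ≠ b := Finset.ne_of_mem_erase hd'
  have hd'' := Finset.mem_of_mem_erase hd'
  have hda : d ≠ a := Finset.ne_of_mem_erase hd''
  have hdS : d ∈ S := Finset.mem_of_mem_erase hd''
  have hcb : c ≠ b := Finset.ne_of_mem_erase hcT
  have hc' := Finset.mem_of_mem_erase hcT
  have hca : c ≠ a := Finset.ne_of_mem_erase hc'
  have hcS : c ∈ S := Finset.mem_of_mem_erase hc'
  have hba : b ≠ a := Finset.ne_of_mem_erase hbT
  have hbS : b ∈ S := Finset.mem_of_mem_erase hbT
  rcases four_adj a b c d hba.symm hca.symm hda.symm hcb.symm hdb.symm hdc.symm with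
    h | h | h | h | h | h
  · exact hS a haT b hbS h
  · exact hS a haT c hcS h
  · exact hS a haT d hdS h
  · exact hS b hbS c hcS h
  · exact hS b hbS d hdS h
  · exact hS c hcS d hdS h

lemma cycle_support_card {V : Type*} [DecidableEq V] {G : SimpleGraph V} {u : V}
    {c : G.Walk u u} (hc : c.IsCycle) : c.support.toFinset.card = c.length := by
  cases c with
  | nil => exact absurd hc.three_le_length (by simp)
  | cons h q =>
    have hnd : q.support.Nodup := by
      have := hc.2
      rwa [SimpleGraph.Walk.support_cons, List.tail_cons] at this
    have hmem : u ∈ q.support := q.end_mem_support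
    rw [SimpleGraph.Walk.support_cons, List.toFinset_cons,
      Finset.insert_eq_self.2 (List.mem_toFinset.2 hmem),
      List.toFinset_card_of_nodup hnd]
    simp [SimpleGraph.Walk.length_support]

/-- The graph `C₁₀²` is not t-perfect. -/
theorem C10sq_not_tPerfect : ¬ TPerfect C10sq := by
  intro h
  set x : ZMod 10 → ℝ := fun _ => 1/3 with hx
  have hsum : ∑ v : ZMod 10, x v = 10 / 3 := by
    simp [hx, Finset.sum_const, Finset.card_univ]
    norm_num
  have hxt : x ∈ tPolytope C10sq := by
    refine ⟨fun v => by norm_num [hx], fun u v _ => by norm_num [hx], ?_⟩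
    intro u c hic hodd
    have hcard := cycle_support_card hic.1
    have h3 := hic.1.three_le_length
    have : ∑ v ∈ c.support.toFinset, x v = (c.length : ℝ) / 3 := by
      rw [Finset.sum_const, hcard]
      simp [hx]
      ring
    rw [this]
    have : (3 : ℝ) ≤ (c.length : ℝ) := by exact_mod_cast h3
    linarith
  have hxs : x ∈ stabPolytope C10sq := h ▸ hxt
  have hconv : Convex ℝ {y : ZMod 10 → ℝ | ∑ v, y v ≤ 3} := by
    intro y hy z hz a b ha hb hab
    simp only [Set.mem_setOf_eq] at *
    have : ∑ v, (a • y + b • z) v = a * ∑ v, y v + b * ∑ v, z v := by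
      simp [Finset.sum_add_distrib, Finset.mul_sum]
    rw [this]
    nlinarith [mul_le_mul_of_nonneg_left hy ha, mul_le_mul_of_nonneg_left hz hb]
  have hsub : {y : ZMod 10 → ℝ | ∃ S : Finset (ZMod 10), IsStableSet C10sq S ∧
      y = fun v => if v ∈ S then (1 : ℝ) else 0} ⊆ {y | ∑ v, y v ≤ 3} := by
    rintro y ⟨S, hS, rfl⟩
    simp only [Set.mem_setOf_eq, Finset.sum_boole, Finset.filter_mem_eq_inter,
      Finset.univ_inter]
    exact_mod_cast stable_card_le S hS
  have := convexHull_min hsub hconv hxs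
  rw [Set.mem_setOf_eq, hsum] at this
  norm_num at this

end TPerfection
end
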